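/- For every h ≥ 1 there exists a trace-orthogonal basis of 𝔽_{2^h} over 𝔽₂, i.e. a basis {e₁,…,e_h} with tr(e_i e_j) = δ_{ij} for all i, j. -/

import Mathlib

open LinearMap (BilinForm)
open Module

private lemma zmod2_cases (a : ZMod 2) : a = 0 ∨ a = 1 := by revert a; decide

/-- Key induction: every nondegenerate symmetric bilinear form over `𝔽₂` admitting a
vector of norm 1 has an orthonormal basis family. -/
private lemma key (n : ℕ) : ∀ (V : Type) [AddCommGroup V] [Module (ZMod 2) V]
    (B : BilinForm (ZMod 2) V), Module.finrank (ZMod 2) V = n →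
    B.IsSymm → B.Nondegenerate → (n = 0 ∨ ∃ v, B v v = 1) →
    ∃ f : Fin n → V, ∀ i j, B (f i) (f j) = if i = j then 1 else 0 := by
  induction n using Nat.strong_induction_on with
  | _ n IH =>
  intro V _ _ B hrank hsymm hnd hex
  rcases n with _ | m
  · exact ⟨Fin.elim0, fun i => i.elim0⟩
  obtain ⟨v, hv⟩ := hex.resolve_left (by omega)
  haveI : FiniteDimensional (ZMod 2) V :=
    Module.finite_of_finrank_pos (by rw [hrank]; omega)
  -- basic facts about orthogonal complements of norm-one vectors
  have mem_orth : ∀ (e w : V), B e e = 1 →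
      (w ∈ B.orthogonal (Submodule.span (ZMod 2) {e}) ↔ B e w = 0) := by
    intro e w he
    constructor
    · intro hw
      exact hw e (Submodule.mem_span_singleton_self e)
    · intro h u hu
      obtain ⟨t, rfl⟩ := Submodule.mem_span_singleton.mp hu
      show B (t • e) w = 0
      rw [map_smul]
      simp [h]
  have orth_rank : ∀ e : V, B e e = 1 →
      finrank (ZMod 2) (B.orthogonal (Submodule.span (ZMod 2) {e})) = m := by
    intro e he
    have hne : ¬ B.IsOrtho e e := by
      rw [LinearMap.BilinForm.isOrtho_def, he]; exact one_ne_zero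
    have hc := LinearMap.BilinForm.isCompl_span_singleton_orthogonal hne
    have h1 : finrank (ZMod 2) (Submodule.span (ZMod 2) {e} : Submodule (ZMod 2) V) = 1 :=
      finrank_span_singleton (LinearMap.BilinForm.ne_zero_of_not_isOrtho_self e hne)
    have := Submodule.finrank_add_eq_of_isCompl hc
    rw [h1, hrank] at this
    omega
  -- Find `e` of norm one whose orthogonal complement also has a norm-one vector
  -- (or the complement is trivial).
  have claim : ∃ e : V, B e e = 1 ∧ (m = 0 ∨
      ∃ w ∈ B.orthogonal (Submodule.span (ZMod 2) {e}), B w w = 1) := by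
    by_cases hW : ∃ w ∈ B.orthogonal (Submodule.span (ZMod 2) {v}), B w w = 1
    · exact ⟨v, hv, Or.inr hW⟩
    rcases Nat.eq_zero_or_pos m with hm | hm
    · exact ⟨v, hv, Or.inl hm⟩
    push_neg at hW
    set W := B.orthogonal (Submodule.span (ZMod 2) {v}) with hWdef
    have halt : ∀ w ∈ W, B w w = 0 := by
      intro w hw
      rcases zmod2_cases (B w w) with h | h
      · exact h
      · exact absurd h (hW w hw)
    have hne : ¬ B.IsOrtho v v := by
      rw [LinearMap.BilinForm.isOrtho_def, hv]; exact one_ne_zero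
    have hWnd : (B.restrict W).Nondegenerate :=
      LinearMap.BilinForm.restrict_nondegenerate_orthogonal_spanSingleton B hnd
        hsymm.isRefl hne
    have hWrank : finrank (ZMod 2) W = m := orth_rank v hv
    -- pick a nonzero x in W
    obtain ⟨x, hx0⟩ : ∃ x : W, x ≠ 0 :=
      Module.finrank_pos_iff_exists_ne_zero.mp (by rw [hWrank]; omega)
    obtain ⟨y, hy⟩ : ∃ y : W, B.restrict W x y ≠ 0 := by
      by_contra hcon
      push_neg at hcon
      exact hx0 (hWnd.1 x hcon)
    have hxy : B (x : V) (y : V) = 1 := by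
      have : B.restrict W x y = B (x : V) (y : V) := rfl
      rcases zmod2_cases (B (x : V) (y : V)) with h | h
      · exact absurd (this.trans h) hy
      · exact h
    have hvx : B v (x : V) = 0 := (mem_orth v x hv).mp x.2
    have hvy : B v (y : V) = 0 := (mem_orth v y hv).mp y.2
    have hxx : B (x : V) (x : V) = 0 := halt _ x.2
    have hyy : B (y : V) (y : V) = 0 := halt _ y.2
    have hyx : B (y : V) (x : V) = 1 := by rw [← hsymm.eq (x : V) (y : V)]; exact hxy
    have hxv : B (x : V) v = 0 := by rw [← hsymm.eq v (x : V)]; exact hvx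
    have hyv : B (y : V) v = 0 := by rw [← hsymm.eq v (y : V)]; exact hvy
    refine ⟨v + (y : V), ?_, Or.inr ⟨v + (x : V) + (y : V), ?_, ?_⟩⟩
    · simp only [map_add, LinearMap.add_apply, hv, hvy, hyv, hyy]
      decide
    · have hee : B (v + (y : V)) (v + (y : V)) = 1 := by
        simp only [map_add, LinearMap.add_apply, hv, hvy, hyv, hyy]; decide
      rw [mem_orth _ _ hee]
      simp only [map_add, LinearMap.add_apply, hv, hvx, hvy, hyv, hyx, hyy]
      decide
    · simp only [map_add, LinearMap.add_apply, hv, hvx, hvy, hxv, hxx, hxy, hyv, hyx, hyy]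
      decide
  obtain ⟨e, hee, hrest⟩ := claim
  set W := B.orthogonal (Submodule.span (ZMod 2) {e}) with hWdef
  have hne : ¬ B.IsOrtho e e := by
    rw [LinearMap.BilinForm.isOrtho_def, hee]; exact one_ne_zero
  have hWnd : (B.restrict W).Nondegenerate :=
    LinearMap.BilinForm.restrict_nondegenerate_orthogonal_spanSingleton B hnd
      hsymm.isRefl hne
  have hWrank : finrank (ZMod 2) W = m := orth_rank e hee
  have hWsymm : (B.restrict W).IsSymm := by
    refine ⟨fun a b => ?_⟩
    exact hsymm.eq (a : V) (b : V)
  have hWex : m = 0 ∨ ∃ w : W, B.restrict W w w = 1 := by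
    rcases hrest with h | ⟨w, hw, hww⟩
    · exact Or.inl h
    · exact Or.inr ⟨⟨w, hw⟩, hww⟩
  obtain ⟨g, hg⟩ := IH m (Nat.lt_succ_self m) W (B.restrict W) hWrank hWsymm hWnd hWex
  refine ⟨Fin.cons e (fun i => (g i : V)), ?_⟩
  have horth : ∀ i, B e (g i : V) = 0 := fun i => (mem_orth e _ hee).mp (g i).2
  intro i j
  refine Fin.cases ?_ (fun i' => ?_) i
  · refine Fin.cases ?_ (fun j' => ?_) j
    · simpa using hee
    · simp only [Fin.cons_zero, Fin.cons_succ]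
      rw [horth j']
      simp [(Fin.succ_ne_zero j').symm]
  · refine Fin.cases ?_ (fun j' => ?_) j
    · simp only [Fin.cons_zero, Fin.cons_succ]
      rw [← hsymm.eq e (g i' : V), horth i']
      simp [Fin.succ_ne_zero i']
    · simp only [Fin.cons_succ]
      have := hg i' j'
      have h2 : B.restrict W (g i') (g j') = B (g i' : V) (g j' : V) := rfl
      rw [h2] at this
      rw [this]
      simp [Fin.succ_inj]

private lemma trace_sq (h : ℕ) (x : GaloisField 2 h) :
    Algebra.trace (ZMod 2) (GaloisField 2 h) (x * x)
      = Algebra.trace (ZMod 2) (GaloisField 2 h) x := by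
  have inj := (algebraMap (ZMod 2) (GaloisField 2 h)).injective
  apply inj
  rw [trace_eq_sum_automorphisms, trace_eq_sum_automorphisms]
  have : ∀ σ : GaloisField 2 h ≃ₐ[ZMod 2] GaloisField 2 h, σ (x * x) = σ x ^ 2 := by
    intro σ; rw [map_mul, sq]
  rw [Finset.sum_congr rfl (fun σ _ => this σ), ← sum_pow_char 2]
  set s := ∑ σ : GaloisField 2 h ≃ₐ[ZMod 2] GaloisField 2 h, σ x with hs
  have hs2 : s ^ 2 = s * s := sq s
  rw [hs2]
  have : s = algebraMap (ZMod 2) (GaloisField 2 h)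
      (Algebra.trace (ZMod 2) (GaloisField 2 h) x) := by
    rw [trace_eq_sum_automorphisms]
  rw [this, ← map_mul]
  congr 1
  rcases zmod2_cases (Algebra.trace (ZMod 2) (GaloisField 2 h) x) with h' | h' <;>
    rw [h'] <;> decide

/-- The absolute trace map `𝔽_{2^h} → 𝔽₂`. -/
noncomputable def trF (h : ℕ) (x : GaloisField 2 h) : ZMod 2 :=
  Algebra.trace (ZMod 2) (GaloisField 2 h) x

/-- For every `h ≥ 1` there exists a trace-orthogonal basis `{e₁,…,e_h}` of
`𝔽_{2^h}` over `𝔽₂`, i.e. a basis with `tr(eᵢeⱼ) = δᵢⱼ`. -/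
theorem stmt_4 (h : ℕ) (hh : 1 ≤ h) :
    ∃ e : Basis (Fin h) (ZMod 2) (GaloisField 2 h),
      ∀ i j, trF h (e i * e j) = if i = j then 1 else 0 := by
  set K := GaloisField 2 h
  set B := Algebra.traceForm (ZMod 2) K with hB
  have hsymm : B.IsSymm := Algebra.traceForm_isSymm (ZMod 2)
  have hnd : B.Nondegenerate := traceForm_nondegenerate (ZMod 2) K
  have hrank : Module.finrank (ZMod 2) K = h := GaloisField.finrank 2 (show h ≠ 0 by omega)
  have hex : ∃ v : K, B v v = 1 := by
    obtain ⟨y, hy⟩ : ∃ y : K, B 1 y ≠ 0 := by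
      by_contra hcon
      push_neg at hcon
      exact one_ne_zero (hnd.1 1 hcon)
    have htr : Algebra.trace (ZMod 2) K y = 1 := by
      rw [Algebra.traceForm_apply, one_mul] at hy
      rcases zmod2_cases (Algebra.trace (ZMod 2) K y) with h' | h'
      · exact absurd h' hy
      · exact h'
    exact ⟨y, by rw [hB, Algebra.traceForm_apply, trace_sq, htr]⟩
  obtain ⟨f, hf⟩ := key h K B hrank hsymm hnd (Or.inr hex)
  have hli : LinearIndependent (ZMod 2) f := by
    rw [linearIndependent_iff']
    intro s g hsum i hi
    have := congrArg (B (f i)) hsum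
    rw [map_sum, map_zero] at this
    have hterm : ∀ j ∈ s, B (f i) (g j • f j) = if j = i then g i else 0 := by
      intro j _
      rw [map_smul, smul_eq_mul, hf i j]
      by_cases hij : j = i
      · subst hij; simp
      · simp [hij, Ne.symm hij]
    rw [Finset.sum_congr rfl hterm, Finset.sum_ite_eq' s i (fun _ => g i)] at this
    simpa [hi] using this
  haveI : Nonempty (Fin h) := ⟨⟨0, by omega⟩⟩
  refine ⟨basisOfLinearIndependentOfCardEqFinrank hli (by simp; exact hrank.symm), ?_⟩
  intro i j
  rw [coe_basisOfLinearIndependentOfCardEqFinrank]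
  have := hf i j
  rw [hB, Algebra.traceForm_apply] at this
  exact this
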